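/- For every Pierce sequence σ ∈ Σ and every n ≥ 1, |φ(σ) - φ(σ^{(n)})| ≤ 1/(σ_1···σ_n σ_{n+1}) and |E*(σ) - E*(σ^{(n)})| ≤ n/(σ_1···σ_n σ_{n+1}), where σ^{(n)} is the sequence agreeing with σ in the first n terms and equal to ∞ afterwards. -/

import Mathlib

open scoped BigOperators

/-- Reciprocal of an extended natural number as a real, with `1/∞ = 0`. -/
noncomputable def pinv (a : ℕ∞) : ℝ := ((a.toNat : ℕ) : ℝ)⁻¹

/-- First Pierce digit: `⌊1/x⌋` for `x ≠ 0`, and `∞` for `x = 0`. -/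
noncomputable def pd1 (x : ℝ) : ℕ∞ := if x = 0 then ⊤ else (⌊x⁻¹⌋₊ : ℕ∞)

/-- Pierce map `T(x) = 1 - ⌊1/x⌋ x` for `x ≠ 0`, `T(0) = 0`. -/
noncomputable def pT (x : ℝ) : ℝ := if x = 0 then 0 else 1 - (⌊x⁻¹⌋₊ : ℝ) * x

/-- `n`-th Pierce digit `d_n(x) = d_1(T^{n-1} x)` (for `n ≥ 1`). -/
noncomputable def pdig (n : ℕ) (x : ℝ) : ℕ∞ := pd1 (pT^[n-1] x)

/-- `1/(d_1(x) ⋯ d_n(x))`, with the convention that a factor `∞` makes it `0`. -/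
noncomputable def pprodR (n : ℕ) (x : ℝ) : ℝ := ∏ k ∈ Finset.Icc 1 n, pinv (pdig k x)

/-- `n`-th partial sum `s_n(x)` of the Pierce expansion of `x`. -/
noncomputable def psum (n : ℕ) (x : ℝ) : ℝ :=
  ∑ k ∈ Finset.Icc 1 n, (-1 : ℝ) ^ (k + 1) * pprodR k x

/-- The error-sum function of Pierce expansions `E(x) = Σ_{n≥1} (x - s_n(x))`. -/
noncomputable def pE (x : ℝ) : ℝ := ∑' n : ℕ, (x - psum (n + 1) x)

/-- A Pierce sequence (0-indexed: `σ k` is the paper's `σ_{k+1}`): terms are positive, strictly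
increasing while finite, and once a term is `∞` all later terms are `∞`. -/
def IsPierce (σ : ℕ → ℕ∞) : Prop :=
  1 ≤ σ 0 ∧ ∀ n, σ n < σ (n + 1) ∨ (σ n = ⊤ ∧ σ (n + 1) = ⊤)

/-- `n`-th partial sum `φ_n(σ)`. -/
noncomputable def pphiN (n : ℕ) (σ : ℕ → ℕ∞) : ℝ :=
  ∑ k ∈ Finset.range n, (-1 : ℝ) ^ k * ∏ i ∈ Finset.range (k + 1), pinv (σ i)

/-- `φ(σ) = Σ_{k≥1} (-1)^{k+1}/(σ_1 ⋯ σ_k)`. -/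
noncomputable def pphi (σ : ℕ → ℕ∞) : ℝ :=
  ∑' k : ℕ, (-1 : ℝ) ^ k * ∏ i ∈ Finset.range (k + 1), pinv (σ i)

/-- The error-sum function of Pierce sequences `E*(σ) = Σ_{n≥1} (φ(σ) - φ_n(σ))`. -/
noncomputable def pEstar (σ : ℕ → ℕ∞) : ℝ := ∑' n : ℕ, (pphi σ - pphiN (n + 1) σ)

/-- The series formula `Σ_{n≥1} (-1)^n n/(σ_1 ⋯ σ_{n+1})` for the error-sum of a sequence. -/
noncomputable def pEstarSeries (σ : ℕ → ℕ∞) : ℝ :=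
  ∑' n : ℕ, (-1 : ℝ) ^ (n + 1) * (n + 1) * ∏ i ∈ Finset.range (n + 2), pinv (σ i)

/-- The metric `ρ(x,y) = 1/x + 1/y` for `x ≠ y` (with `1/∞ = 0`), `ρ(x,x) = 0`. -/
noncomputable def prho (x y : ℕ∞) : ℝ := if x = y then 0 else pinv x + pinv y

/-- The metric `ρ^ℕ(σ,τ) = Σ_{n≥1} ρ(σ_n, τ_n)/n!` on sequences. -/
noncomputable def prhoN (σ τ : ℕ → ℕ∞) : ℝ :=
  ∑' n : ℕ, prho (σ n) (τ n) / ((n + 1).factorial : ℝ)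

/-- Truncation `σ^{(n)}`: the first `n` terms of `σ` followed by `∞`'s. -/
def ptrunc (σ : ℕ → ℕ∞) (n : ℕ) : ℕ → ℕ∞ := fun k => if k < n then σ k else ⊤

/-! ### Auxiliary lemmas -/

noncomputable def pP (σ : ℕ → ℕ∞) (k : ℕ) : ℝ := ∏ i ∈ Finset.range (k + 1), pinv (σ i)

lemma pinv_nonneg' (a : ℕ∞) : 0 ≤ pinv a := by unfold pinv; positivity

lemma pinv_top : pinv ⊤ = 0 := by simp [pinv]

lemma pierce_lower {σ : ℕ → ℕ∞} (hσ : IsPierce σ) : ∀ i : ℕ, ((i : ℕ∞) + 1) ≤ σ i := by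
  intro i
  induction i with
  | zero => simpa using hσ.1
  | succ k ih =>
    rcases hσ.2 k with h | ⟨h1, h2⟩
    · push_cast
      calc ((k : ℕ∞) + 1) + 1 ≤ σ k + 1 := by gcongr
        _ ≤ σ (k + 1) := Order.add_one_le_of_lt h
    · simp [h2]

lemma pinv_pierce_le {σ : ℕ → ℕ∞} (hσ : IsPierce σ) (i : ℕ) :
    pinv (σ i) ≤ ((i : ℝ) + 1)⁻¹ := by
  rcases eq_or_ne (σ i) ⊤ with h | h
  · rw [h, pinv_top]; positivity
  · set m := (σ i).toNat with hmdef
    have hm : (m : ℕ∞) = σ i := ENat.coe_toNat h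
    have hle : (i : ℕ∞) + 1 ≤ (m : ℕ∞) := hm ▸ pierce_lower hσ i
    have hle' : i + 1 ≤ m := by exact_mod_cast hle
    unfold pinv
    rw [show ((i:ℝ)+1) = ((i+1 : ℕ) : ℝ) by push_cast; ring]
    exact inv_anti₀ (by positivity) (by exact_mod_cast hle')

lemma pP_nonneg (σ : ℕ → ℕ∞) (k : ℕ) : 0 ≤ pP σ k :=
  Finset.prod_nonneg fun i _ => pinv_nonneg' _

lemma pP_succ (σ : ℕ → ℕ∞) (k : ℕ) : pP σ (k+1) = pP σ k * pinv (σ (k+1)) :=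
  Finset.prod_range_succ _ _

lemma pP_step {σ : ℕ → ℕ∞} (hσ : IsPierce σ) (k : ℕ) :
    pP σ (k+1) ≤ pP σ k * ((k:ℝ)+2)⁻¹ := by
  rw [pP_succ]
  apply mul_le_mul_of_nonneg_left _ (pP_nonneg σ k)
  have := pinv_pierce_le hσ (k+1)
  push_cast at this
  convert this using 2
  · rfl
  ring

lemma pP_anti {σ : ℕ → ℕ∞} (hσ : IsPierce σ) (k : ℕ) : pP σ (k+1) ≤ pP σ k := by
  have h := pP_step hσ k
  have h2 : ((k:ℝ)+2)⁻¹ ≤ 1 := by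
    rw [show (1:ℝ) = (1:ℝ)⁻¹ by norm_num]
    exact inv_anti₀ (by norm_num) (by linarith [Nat.cast_nonneg (α := ℝ) k])
  calc pP σ (k+1) ≤ pP σ k * ((k:ℝ)+2)⁻¹ := h
    _ ≤ pP σ k * 1 := mul_le_mul_of_nonneg_left h2 (pP_nonneg σ k)
    _ = pP σ k := mul_one _

lemma pP_mulstep {σ : ℕ → ℕ∞} (hσ : IsPierce σ) (k : ℕ) :
    ((k:ℝ)+1) * pP σ (k+1) ≤ pP σ k := by
  have h := pP_step hσ k
  have hk : (0:ℝ) < (k:ℝ)+2 := by positivity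
  have h3 : ((k:ℝ)+2)⁻¹ * ((k:ℝ)+1) ≤ 1 := by
    rw [show ((k:ℝ)+2)⁻¹ * ((k:ℝ)+1) = ((k:ℝ)+1)/((k:ℝ)+2) by ring]
    rw [div_le_one hk]; linarith
  calc ((k:ℝ)+1) * pP σ (k+1) ≤ ((k:ℝ)+1) * (pP σ k * ((k:ℝ)+2)⁻¹) :=
        mul_le_mul_of_nonneg_left h (by positivity)
    _ = pP σ k * (((k:ℝ)+2)⁻¹ * ((k:ℝ)+1)) := by ring
    _ ≤ pP σ k * 1 := mul_le_mul_of_nonneg_left h3 (pP_nonneg σ k)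
    _ = pP σ k := mul_one _

lemma pP_fact {σ : ℕ → ℕ∞} (hσ : IsPierce σ) : ∀ k, pP σ k ≤ ((Nat.factorial (k+1) : ℝ))⁻¹ := by
  intro k
  induction k with
  | zero =>
    have := pinv_pierce_le hσ 0
    simpa [pP, Nat.factorial] using this
  | succ k ih =>
    have h := pP_step hσ k
    have hfact : ((Nat.factorial (k+2) : ℝ)) = ((k:ℝ)+2) * (Nat.factorial (k+1) : ℝ) := by
      rw [Nat.factorial_succ]; push_cast; ring
    calc pP σ (k+1) ≤ pP σ k * ((k:ℝ)+2)⁻¹ := h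
      _ ≤ ((Nat.factorial (k+1) : ℝ))⁻¹ * ((k:ℝ)+2)⁻¹ :=
          mul_le_mul_of_nonneg_right ih (by positivity)
      _ = ((Nat.factorial (k+2) : ℝ))⁻¹ := by rw [hfact, mul_inv]; ring

lemma fact_inv_mono {j k : ℕ} (h : j ≤ k) :
    ((Nat.factorial k : ℝ))⁻¹ ≤ ((Nat.factorial j : ℝ))⁻¹ :=
  inv_anti₀ (by exact_mod_cast j.factorial_pos) (by exact_mod_cast Nat.factorial_le h)

lemma summable_fact_bound (f : ℕ → ℝ) (h : ∀ k, |f k| ≤ ((Nat.factorial k : ℝ))⁻¹) :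
    Summable f := by
  apply Summable.of_norm
  apply Summable.of_nonneg_of_le (fun k => norm_nonneg _) (fun k => h k)
  simpa using Real.summable_pow_div_factorial 1

lemma alt_abs_le (f : ℕ → ℝ) (hfa : Antitone f)
    (hs : Summable fun j => (-1 : ℝ) ^ j * f j) :
    |∑' j, (-1 : ℝ) ^ j * f j| ≤ f 0 := by
  have hl := hs.hasSum.tendsto_sum_nat
  have h1 := hfa.alternating_series_le_tendsto hl 0
  have h2 := hfa.tendsto_le_alternating_series hl 0
  simp [Finset.sum_range_succ] at h1 h2
  rw [abs_le]
  exact ⟨le_trans (by linarith) h1, h2⟩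

lemma ptrunc_isPierce {σ : ℕ → ℕ∞} (hσ : IsPierce σ) (n : ℕ) : IsPierce (ptrunc σ n) := by
  constructor
  · by_cases h : 0 < n
    · simpa [ptrunc, h] using hσ.1
    · simp [ptrunc, h]
  · intro k
    by_cases h1 : k + 1 < n
    · have h2 : k < n := by omega
      simpa [ptrunc, h1, h2] using hσ.2 k
    · by_cases h2 : k < n
      · simp only [ptrunc, if_pos h2, if_neg h1]
        rcases eq_or_ne (σ k) ⊤ with ht | ht
        · right; refine ⟨ht, ?_⟩; simp
        · left; exact lt_top_iff_ne_top.mpr ht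
      · right; simp [ptrunc, h1, h2]

lemma tsum_tail (g gτ : ℕ → ℝ) (N : ℕ) (hg : Summable g) (hgτ : Summable gτ)
    (h1 : ∀ k < N, gτ k = g k) (h2 : ∀ k, N ≤ k → gτ k = 0) :
    ∑' k, g k - ∑' k, gτ k = ∑' j, g (j + N) := by
  rw [← hg.tsum_sub hgτ]
  have hd : Summable (fun k => g k - gτ k) := hg.sub hgτ
  rw [← hd.sum_add_tsum_nat_add N]
  have hzero : ∀ i ∈ Finset.range N, g i - gτ i = 0 := fun i hi => by
    rw [h1 i (Finset.mem_range.mp hi)]; ring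
  rw [Finset.sum_eq_zero hzero, zero_add]
  exact tsum_congr fun j => by rw [h2 (j+N) (by omega)]; ring

theorem stmt19 (σ : ℕ → ℕ∞) (hσ : IsPierce σ) (n : ℕ) (hn : 1 ≤ n) :
    |pphi σ - pphi (ptrunc σ n)| ≤ ∏ i ∈ Finset.range (n + 1), pinv (σ i) ∧
    |pEstarSeries σ - pEstarSeries (ptrunc σ n)| ≤
      (n : ℝ) * ∏ i ∈ Finset.range (n + 1), pinv (σ i) := by
  obtain ⟨m, rfl⟩ : ∃ m, n = m + 1 := ⟨n - 1, by omega⟩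
  have hτp : IsPierce (ptrunc σ (m+1)) := ptrunc_isPierce hσ (m+1)
  set τ := ptrunc σ (m+1) with hτdef
  have hb : ∀ (σ' : ℕ → ℕ∞), IsPierce σ' → Summable (fun k : ℕ => (-1:ℝ)^k * pP σ' k) := by
    intro σ' hσ'
    apply summable_fact_bound
    intro k
    rw [abs_mul, abs_pow, abs_neg, abs_one, one_pow, one_mul, abs_of_nonneg (pP_nonneg _ _)]
    exact (pP_fact hσ' k).trans (fact_inv_mono (by omega))
  have hbE : ∀ (σ' : ℕ → ℕ∞), IsPierce σ' →
      Summable (fun k : ℕ => (-1:ℝ)^(k+1) * ((k:ℝ)+1) * pP σ' (k+1)) := by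
    intro σ' hσ'
    apply summable_fact_bound
    intro k
    have h1 : |(-1:ℝ)^(k+1) * ((k:ℝ)+1) * pP σ' (k+1)| = ((k:ℝ)+1) * pP σ' (k+1) := by
      rw [abs_mul, abs_mul, abs_pow, abs_neg, abs_one, one_pow, one_mul,
        abs_of_nonneg (by positivity : (0:ℝ) ≤ (k:ℝ)+1), abs_of_nonneg (pP_nonneg _ _)]
    rw [h1]
    exact (pP_mulstep hσ' k).trans ((pP_fact hσ' k).trans (fact_inv_mono (by omega)))
  constructor
  · -- φ part
    have hg := hb σ hσ
    have hgτ := hb τ hτp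
    have heq : ∀ k < m+1, (-1:ℝ)^k * pP τ k = (-1:ℝ)^k * pP σ k := by
      intro k hk
      congr 1
      apply Finset.prod_congr rfl
      intro i hi
      simp only [Finset.mem_range] at hi
      simp only [hτdef, ptrunc]
      rw [if_pos (by omega)]
    have hz : ∀ k, m+1 ≤ k → (-1:ℝ)^k * pP τ k = 0 := by
      intro k hk
      have hzz : pP τ k = 0 := by
        apply Finset.prod_eq_zero (Finset.mem_range.mpr (show m+1 < k+1 by omega))
        simp [hτdef, ptrunc, pinv_top]
      rw [hzz, mul_zero]
    have hδ : pphi σ - pphi τ = ∑' j, (-1:ℝ)^(j+(m+1)) * pP σ (j+(m+1)) := by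
      have e1 : pphi σ = ∑' k, (-1:ℝ)^k * pP σ k := rfl
      have e2 : pphi τ = ∑' k, (-1:ℝ)^k * pP τ k := rfl
      rw [e1, e2, tsum_tail _ _ (m+1) hg hgτ heq hz]
    rw [hδ]
    have e3 : ∀ j:ℕ, (-1:ℝ)^(j+(m+1)) * pP σ (j+(m+1))
        = (-1:ℝ)^(m+1) * ((-1:ℝ)^j * pP σ (j+(m+1))) := by
      intro j; rw [pow_add]; ring
    rw [tsum_congr e3, tsum_mul_left, abs_mul, abs_pow, abs_neg, abs_one, one_pow, one_mul]
    have hanti : Antitone (fun j : ℕ => pP σ (j+(m+1))) := by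
      apply antitone_nat_of_succ_le
      intro j
      show pP σ (j+1+(m+1)) ≤ pP σ (j+(m+1))
      rw [show j+1+(m+1) = (j+(m+1))+1 by omega]
      exact pP_anti hσ _
    have hsum : Summable (fun j : ℕ => (-1:ℝ)^j * pP σ (j+(m+1))) := by
      apply summable_fact_bound
      intro j
      rw [abs_mul, abs_pow, abs_neg, abs_one, one_pow, one_mul, abs_of_nonneg (pP_nonneg _ _)]
      exact (pP_fact hσ _).trans (fact_inv_mono (by omega))
    have hfin := alt_abs_le _ hanti hsum
    simpa [pP] using hfin
  · -- E* part
    have hg := hbE σ hσ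
    have hgτ := hbE τ hτp
    have heq : ∀ k < m, (-1:ℝ)^(k+1) * ((k:ℝ)+1) * pP τ (k+1)
        = (-1:ℝ)^(k+1) * ((k:ℝ)+1) * pP σ (k+1) := by
      intro k hk
      congr 1
      apply Finset.prod_congr rfl
      intro i hi
      simp only [Finset.mem_range] at hi
      simp only [hτdef, ptrunc]
      rw [if_pos (by omega)]
    have hz : ∀ k, m ≤ k → (-1:ℝ)^(k+1) * ((k:ℝ)+1) * pP τ (k+1) = 0 := by
      intro k hk
      have hzz : pP τ (k+1) = 0 := by
        apply Finset.prod_eq_zero (Finset.mem_range.mpr (show m+1 < k+1+1 by omega))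
        simp [hτdef, ptrunc, pinv_top]
      rw [hzz, mul_zero]
    have hδ : pEstarSeries σ - pEstarSeries τ
        = ∑' j, (-1:ℝ)^((j+m)+1) * (((j+m:ℕ):ℝ)+1) * pP σ ((j+m)+1) := by
      have e1 : pEstarSeries σ = ∑' k : ℕ, (-1:ℝ)^(k+1) * ((k:ℝ)+1) * pP σ (k+1) := rfl
      have e2 : pEstarSeries τ = ∑' k : ℕ, (-1:ℝ)^(k+1) * ((k:ℝ)+1) * pP τ (k+1) := rfl
      rw [e1, e2, tsum_tail _ _ m hg hgτ heq hz]
    rw [hδ]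
    have e3 : ∀ j:ℕ, (-1:ℝ)^((j+m)+1) * (((j+m:ℕ):ℝ)+1) * pP σ ((j+m)+1)
        = (-1:ℝ)^(m+1) * ((-1:ℝ)^j * (((j:ℝ)+(m:ℝ)+1) * pP σ (j+m+1))) := by
      intro j
      rw [show (j+m)+1 = j + (m+1) by omega, pow_add]
      push_cast
      ring
    rw [tsum_congr e3, tsum_mul_left, abs_mul, abs_pow, abs_neg, abs_one, one_pow, one_mul]
    have hanti : Antitone (fun j : ℕ => ((j:ℝ)+(m:ℝ)+1) * pP σ (j+m+1)) := by
      apply antitone_nat_of_succ_le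
      intro j
      show ((↑(j+1):ℝ)+(m:ℝ)+1) * pP σ (j+1+m+1) ≤ ((j:ℝ)+(m:ℝ)+1) * pP σ (j+m+1)
      rw [show j+1+m+1 = (j+m+1)+1 by omega,
        show ((↑(j+1):ℝ)+(m:ℝ)+1) = ((↑(j+m+1):ℝ)+1) by push_cast; ring]
      calc ((↑(j+m+1):ℝ)+1) * pP σ ((j+m+1)+1) ≤ pP σ (j+m+1) := pP_mulstep hσ (j+m+1)
        _ ≤ ((j:ℝ)+(m:ℝ)+1) * pP σ (j+m+1) :=
            le_mul_of_one_le_left (pP_nonneg _ _)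
              (by linarith [Nat.cast_nonneg (α := ℝ) j, Nat.cast_nonneg (α := ℝ) m])
    have hsum : Summable (fun j : ℕ => (-1:ℝ)^j * (((j:ℝ)+(m:ℝ)+1) * pP σ (j+m+1))) := by
      apply summable_fact_bound
      intro j
      rw [abs_mul, abs_pow, abs_neg, abs_one, one_pow, one_mul, abs_mul,
        abs_of_nonneg (show (0:ℝ) ≤ (j:ℝ)+(m:ℝ)+1 by positivity),
        abs_of_nonneg (pP_nonneg _ _)]
      rw [show ((j:ℝ)+(m:ℝ)+1) = ((↑(j+m):ℝ)+1) by push_cast; ring]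
      exact (pP_mulstep hσ (j+m)).trans ((pP_fact hσ _).trans (fact_inv_mono (by omega)))
    have hfin := alt_abs_le _ hanti hsum
    simp only [Nat.cast_zero, zero_add, Nat.zero_add] at hfin
    refine hfin.trans_eq ?_
    rw [pP]
    push_cast
    ring
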